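/- There exists Q ∈ ℂ[[ℏ, u_1, u_2]], symmetric under exchanging u_1 and u_2, such that P(u_1 + ℏ, u_2) − ((1 + e^ℏ)/2) · P(u_1, u_2) = (u_1 − u_2 − ℏ) · Q. -/

import Mathlib

noncomputable section

open MvPowerSeries

/-- The exponential `exp(a·ℏ + b·u₁ + c·u₂) ∈ ℂ[[ℏ,u₁,u₂]]` of a linear form. -/
def expLin3C (a b c : ℂ) : MvPowerSeries (Fin 3) ℂ :=
  fun d => (a ^ (d 0) / (d 0).factorial) * (b ^ (d 1) / (d 1).factorial) *
    (c ^ (d 2) / (d 2).factorial)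

/-- `f` is symmetric under exchanging the variables `X 1` and `X 2`. -/
def symm12 (f : MvPowerSeries (Fin 3) ℂ) : Prop :=
  ∀ d : Fin 3 →₀ ℕ,
    MvPowerSeries.coeff (Finsupp.equivMapDomain (Equiv.swap (1 : Fin 3) 2) d) f =
      MvPowerSeries.coeff d f

private lemma coeff_X_mul3 (i : Fin 3) (f : MvPowerSeries (Fin 3) ℂ) (d : Fin 3 →₀ ℕ) :
    MvPowerSeries.coeff d (X i * f) =
      if 1 ≤ d i then MvPowerSeries.coeff (d - Finsupp.single i 1) f else 0 := by
  rw [X, coeff_monomial_mul]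
  simp [Finsupp.single_le_iff]

private lemma tsub_single_apply (d : Fin 3 →₀ ℕ) (i j : Fin 3) :
    (d - Finsupp.single i 1 : Fin 3 →₀ ℕ) j = if i = j then d j - 1 else d j := by
  rw [Finsupp.tsub_apply, Finsupp.single_apply]
  split <;> simp

private lemma choose_div_factorial (n k : ℕ) :
    ((n+k).choose n : ℂ) / ((n+k).factorial : ℂ) = 1 / ((n.factorial : ℂ) * (k.factorial : ℂ)) := by
  have h1 : (((n+k).factorial : ℂ)) ≠ 0 := Nat.cast_ne_zero.mpr (n+k).factorial_ne_zero
  have h2 : ((n.factorial : ℂ)) ≠ 0 := Nat.cast_ne_zero.mpr n.factorial_ne_zero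
  have h3 : ((k.factorial : ℂ)) ≠ 0 := Nat.cast_ne_zero.mpr k.factorial_ne_zero
  rw [div_eq_div_iff h1 (mul_ne_zero h2 h3), one_mul, ← Nat.cast_mul, ← Nat.cast_mul,
    Nat.cast_inj]
  have h := Nat.add_choose_mul_factorial_mul_factorial k n
  rw [Nat.add_comm k n] at h
  rw [← Nat.mul_assoc, mul_right_comm]
  exact h

/-- coefficients of `P(u₁+ℏ, u₂)` -/
private def pp1 (a b c : ℕ) : ℂ := ((a+b).choose a : ℂ) / ((a+b+c+1).factorial : ℂ)

/-- coefficients of `P(u₁, u₂+ℏ)` -/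
private def pp2 (a b c : ℕ) : ℂ := ((a+c).choose a : ℂ) / ((a+b+c+1).factorial : ℂ)

/-- coefficients of `P(u₁, u₂)` -/
private def pp0 (a b c : ℕ) : ℂ := if a = 0 then (((a+b+c+1).factorial : ℂ))⁻¹ else 0

private def aa (a b c : ℕ) : ℂ := pp1 a b c - pp2 a b c

private def vv (a b c : ℕ) : ℂ := ∑ k ∈ Finset.range (c+1), aa a (b+1+k) (c-k)

private def PP1s : MvPowerSeries (Fin 3) ℂ := fun d => pp1 (d 0) (d 1) (d 2)
private def PP2s : MvPowerSeries (Fin 3) ℂ := fun d => pp2 (d 0) (d 1) (d 2)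
private def PP0s : MvPowerSeries (Fin 3) ℂ := fun d => pp0 (d 0) (d 1) (d 2)
private def VVs : MvPowerSeries (Fin 3) ℂ := fun d => vv (d 0) (d 1) (d 2)
private def VVs' : MvPowerSeries (Fin 3) ℂ := fun d => vv (d 0) (d 2) (d 1)

private lemma aa_swap (a b c : ℕ) : aa a c b = - aa a b c := by
  unfold aa pp1 pp2
  rw [show a+c+b+1 = a+b+c+1 from by omega]
  ring

private lemma pascal' (n k : ℕ) : n.choose k + n.choose (k+1) = (n+1).choose (k+1) := by
  simpa using (Nat.choose_succ_succ n k).symm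

private lemma aa_diag_sum (a n : ℕ) : ∑ j ∈ Finset.range (n+1), aa a j (n-j) = 0 := by
  have h := Finset.sum_range_reflect (fun j => aa a j (n-j)) (n+1)
  have h2 : ∀ j ∈ Finset.range (n+1), aa a (n + 1 - 1 - j) (n - (n + 1 - 1 - j))
      = - aa a j (n - j) := by
    intro j hj
    rw [Finset.mem_range] at hj
    have e1 : n + 1 - 1 - j = n - j := by omega
    have e2 : n - (n - j) = j := by omega
    rw [e1, e2]
    exact aa_swap a j (n - j)
  rw [Finset.sum_congr rfl h2, Finset.sum_neg_distrib] at h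
  have h3 : (2:ℂ) * (∑ j ∈ Finset.range (n+1), aa a j (n-j)) = 0 := by
    linear_combination (-1 : ℂ) * h
  rcases mul_eq_zero.mp h3 with h4 | h4
  · norm_num at h4
  · exact h4

private lemma vv_step (a b c : ℕ) :
    vv a b c - (if 1 ≤ c then vv a (b+1) (c-1) else 0) = aa a (b+1) c := by
  rcases c with _ | C
  · simp [vv]
  · rw [if_pos (by omega : (1:ℕ) ≤ C+1), Nat.add_sub_cancel]
    rw [vv, vv, Finset.sum_range_succ']
    have h : ∀ k ∈ Finset.range (C+1), aa a (b+1+(k+1)) (C+1-(k+1)) = aa a (b+1+1+k) (C-k) := by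
      intro k hk
      have e2 : C+1-(k+1) = C-k := by omega
      have e1 : b+1+(k+1) = b+1+1+k := by omega
      rw [e2, e1]
    rw [Finset.sum_congr rfl h]
    simp

private lemma hVc (a b c : ℕ) :
    (if 1 ≤ b then vv a (b-1) c else 0) - (if 1 ≤ c then vv a b (c-1) else 0) = aa a b c := by
  rcases b with _ | B
  · rw [if_neg (by omega : ¬ (1:ℕ) ≤ 0)]
    rcases c with _ | C
    · rw [if_neg (by omega : ¬ (1:ℕ) ≤ 0)]
      simp [aa, pp1, pp2]
    · rw [if_pos (by omega : (1:ℕ) ≤ C+1), Nat.add_sub_cancel]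
      have hd := aa_diag_sum a (C+1)
      rw [Finset.sum_range_succ'] at hd
      have h : ∀ j ∈ Finset.range (C+1), aa a (j+1) (C+1-(j+1)) = aa a (0+1+j) (C-j) := by
        intro j hj
        have e2 : C+1-(j+1) = C-j := by omega
        have e1 : j+1 = 0+1+j := by omega
        rw [e2, e1]
      rw [Finset.sum_congr rfl h] at hd
      simp only [Nat.sub_zero] at hd
      rw [vv]
      linear_combination -hd
  · rw [if_pos (by omega : (1:ℕ) ≤ B+1), Nat.add_sub_cancel]
    exact vv_step a B c

private lemma claimA :
    (X 0 + X 1 - X 2 : MvPowerSeries (Fin 3) ℂ) * PP1s = expLin3C 1 1 0 - expLin3C 0 0 1 := by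
  ext d
  rw [sub_mul, add_mul, map_sub, map_add, coeff_X_mul3, coeff_X_mul3, coeff_X_mul3, map_sub]
  simp only [MvPowerSeries.coeff_apply, PP1s, expLin3C, tsub_single_apply]
  norm_num
  generalize d 0 = a
  generalize d 1 = b
  generalize d 2 = c
  rcases a with _ | a <;> rcases b with _ | b <;> rcases c with _ | c <;>
    simp [pp1, Nat.succ_sub_one]
  · rw [show b + (c+1) + 1 = b+1+c+1 from by omega, sub_self]
  · rw [show a + (c+1) + 1 = a+1+c+1 from by omega, sub_self]
  · rw [show a + (b+1) + 1 = a+b+1+1 from by omega, show a + (b+1) = a+b+1 from by omega,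
      show a+1+b+1 = a+b+1+1 from by omega, show a+1+b = a+b+1 from by omega,
      ← add_div, ← Nat.cast_add, pascal' (a+b+1) a,
      show a+b+1+1 = (a+1)+(b+1) from by omega,
      choose_div_factorial (a+1) (b+1), one_div, mul_inv]
  · rw [show a+(b+1)+(c+1)+1 = a+b+c+3 from by omega, show a + (b+1) = a+b+1 from by omega,
      show a+1+b+(c+1)+1 = a+b+c+3 from by omega, show a+1+b = a+b+1 from by omega,
      show a+1+(b+1)+c+1 = a+b+c+3 from by omega, show a+1+(b+1) = a+b+1+1 from by omega,
      ← add_div, ← Nat.cast_add, pascal' (a+b+1) a, sub_self]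

private lemma claimB :
    (X 1 - X 0 - X 2 : MvPowerSeries (Fin 3) ℂ) * PP2s = expLin3C 0 1 0 - expLin3C 1 0 1 := by
  ext d
  rw [sub_mul, sub_mul, map_sub, map_sub, coeff_X_mul3, coeff_X_mul3, coeff_X_mul3, map_sub]
  simp only [MvPowerSeries.coeff_apply, PP2s, expLin3C, tsub_single_apply]
  norm_num
  generalize d 0 = a
  generalize d 1 = b
  generalize d 2 = c
  rcases a with _ | a <;> rcases b with _ | b <;> rcases c with _ | c <;>
    simp [pp2, Nat.succ_sub_one]
  · rw [show b + (c+1) + 1 = b+1+c+1 from by omega, sub_self]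
  · rw [show a + (c+1) + 1 = a+1+c+1 from by omega, show a + (c+1) = a+c+1 from by omega,
      show a+1+c+1 = a+c+1+1 from by omega, show a+1+c = a+c+1 from by omega]
    rw [show (-(↑((a+c+1).choose a) / ((a+c+1+1).factorial : ℂ)) -
        ↑((a+c+1).choose (a+1)) / ((a+c+1+1).factorial : ℂ)) =
        -((↑((a+c+1).choose a) + ↑((a+c+1).choose (a+1))) / ((a+c+1+1).factorial : ℂ)) from by
      ring]
    rw [← Nat.cast_add, pascal' (a+c+1) a,
      show a+c+1+1 = (a+1)+(c+1) from by omega,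
      choose_div_factorial (a+1) (c+1), one_div, mul_inv]
  · rw [show a + 1 + b + 1 = a+(b+1)+1 from by omega, sub_self]
  · rw [show a+1+b+(c+1)+1 = a+b+c+3 from by omega,
      show a+(b+1)+(c+1)+1 = a+b+c+3 from by omega,
      show a+1+(b+1)+c+1 = a+b+c+3 from by omega,
      show a+1+(c+1) = a+c+1+1 from by omega,
      show a + (c+1) = a+c+1 from by omega, show a+1+c = a+c+1 from by omega]
    rw [show (↑((a+c+1+1).choose (a+1)) / ((a+b+c+3).factorial : ℂ) -
        ↑((a+c+1).choose a) / ((a+b+c+3).factorial : ℂ) -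
        ↑((a+c+1).choose (a+1)) / ((a+b+c+3).factorial : ℂ)) =
        (↑((a+c+1+1).choose (a+1)) - (↑((a+c+1).choose a) + ↑((a+c+1).choose (a+1)))) /
          ((a+b+c+3).factorial : ℂ) from by ring]
    rw [← Nat.cast_add, pascal' (a+c+1) a, sub_self, zero_div]

private lemma claimC :
    (X 1 - X 2 : MvPowerSeries (Fin 3) ℂ) * PP0s = expLin3C 0 1 0 - expLin3C 0 0 1 := by
  ext d
  rw [sub_mul, map_sub, coeff_X_mul3, coeff_X_mul3, map_sub]
  simp only [MvPowerSeries.coeff_apply, PP0s, expLin3C, tsub_single_apply]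
  norm_num
  generalize d 0 = a
  generalize d 1 = b
  generalize d 2 = c
  rcases a with _ | a <;> rcases b with _ | b <;> rcases c with _ | c <;>
    simp [pp0, Nat.succ_sub_one]
  · rw [show b + (c+1) + 1 = b+1+c+1 from by omega, sub_self]

private lemma claimV :
    (X 1 - X 2 : MvPowerSeries (Fin 3) ℂ) * VVs = PP1s - PP2s := by
  ext d
  rw [sub_mul, map_sub, coeff_X_mul3, coeff_X_mul3, map_sub]
  simp only [MvPowerSeries.coeff_apply, VVs, PP1s, PP2s, tsub_single_apply]
  norm_num [Fin.ext_iff]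
  exact hVc (d 0) (d 1) (d 2)

private lemma claimV' :
    (X 1 - X 2 : MvPowerSeries (Fin 3) ℂ) * VVs' = PP1s - PP2s := by
  ext d
  rw [sub_mul, map_sub, coeff_X_mul3, coeff_X_mul3, map_sub]
  simp only [MvPowerSeries.coeff_apply, VVs', PP1s, PP2s, tsub_single_apply]
  norm_num [Fin.ext_iff]
  have h := hVc (d 0) (d 2) (d 1)
  have h2 := aa_swap (d 0) (d 1) (d 2)
  have ha : aa (d 0) (d 1) (d 2) = pp1 (d 0) (d 1) (d 2) - pp2 (d 0) (d 1) (d 2) := rfl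
  linear_combination (-1 : ℂ) * h - h2 + ha

private lemma L1gen (b c : ℂ) : expLin3C 1 0 0 * expLin3C 0 b c = expLin3C 1 b c := by
  ext d
  rw [MvPowerSeries.coeff_mul]
  rw [Finset.sum_eq_single ((Finsupp.single (0 : Fin 3) (d 0), d - Finsupp.single 0 (d 0)))]
  · simp only [MvPowerSeries.coeff_apply, expLin3C, Finsupp.single_apply, Finsupp.tsub_apply]
    norm_num [Fin.ext_iff]
    ring
  · intro pq hmem hne
    rw [Finset.HasAntidiagonal.mem_antidiagonal] at hmem
    have hmj : ∀ j : Fin 3, pq.1 j + pq.2 j = d j := by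
      intro j
      rw [← hmem, Finsupp.add_apply]
    simp only [MvPowerSeries.coeff_apply, expLin3C]
    by_contra hne0
    have h1 : pq.1 1 = 0 := by
      by_contra hh
      exact hne0 (by rw [zero_pow hh]; ring)
    have h2 : pq.1 2 = 0 := by
      by_contra hh
      exact hne0 (by rw [zero_pow hh]; ring)
    have h3 : pq.2 0 = 0 := by
      by_contra hh
      exact hne0 (by rw [zero_pow hh]; ring)
    have e0 : pq.1 0 = d 0 := by have := hmj 0; omega
    have f0 : pq.2 0 = d 0 - d 0 := by omega
    have f1 : pq.2 1 = d 1 := by have := hmj 1; omega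
    have f2 : pq.2 2 = d 2 := by have := hmj 2; omega
    apply hne
    have hp : pq.1 = Finsupp.single (0 : Fin 3) (d 0) := by
      ext j
      fin_cases j <;> simp [Finsupp.single_apply, h1, h2, e0]
    have hq : pq.2 = d - Finsupp.single 0 (d 0) := by
      ext j
      fin_cases j <;>
        simp [Finsupp.tsub_apply, Finsupp.single_apply, f0, f1, f2]
    rw [Prod.ext_iff]
    exact ⟨hp, hq⟩
  · intro habs
    exfalso
    apply habs
    rw [Finset.HasAntidiagonal.mem_antidiagonal]
    ext j
    rw [Finsupp.add_apply, Finsupp.tsub_apply]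
    fin_cases j <;> simp [Finsupp.single_apply]

private lemma L1a : expLin3C 1 0 0 * expLin3C 0 1 0 = expLin3C 1 1 0 := L1gen 1 0

private lemma L1b : expLin3C 1 0 0 * expLin3C 0 0 1 = expLin3C 1 0 1 := L1gen 0 1

private lemma hu_ne : (X 1 - X 2 : MvPowerSeries (Fin 3) ℂ) ≠ 0 := by
  intro h
  have h2 := congrArg (MvPowerSeries.coeff (Finsupp.single 1 1)) h
  rw [map_sub] at h2
  simp [MvPowerSeries.coeff_X, Finsupp.single_eq_single_iff] at h2

private lemma hw_ne : (X 0 + X 1 - X 2 : MvPowerSeries (Fin 3) ℂ) ≠ 0 := by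
  intro h
  have h2 := congrArg (MvPowerSeries.coeff (Finsupp.single 1 1)) h
  rw [map_sub, map_add] at h2
  simp [MvPowerSeries.coeff_X, Finsupp.single_eq_single_iff] at h2

/-- There exists `Q ∈ ℂ[[ℏ, u₁, u₂]]`, symmetric under exchanging
`u₁ ↔ u₂`, such that `P(u₁ + ℏ, u₂) − ((1 + e^ℏ)/2)·P(u₁, u₂) = (u₁ − u₂ − ℏ)·Q`,
where `(x − y)·P(x, y) = e^x − e^y`.

The variables are `ℏ = X 0`, `u₁ = X 1`, `u₂ = X 2`; the substituted series
`P₁ = P(u₁ + ℏ, u₂)` and `P₂ = P(u₁, u₂)` are pinned down by their unique algebraic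
characterisations below. -/
theorem statement13
    (P₁ P₂ : MvPowerSeries (Fin 3) ℂ)
    (hP₁ : (X 1 + X 0 - X 2) * P₁ = expLin3C 1 1 0 - expLin3C 0 0 1)
    (hP₂ : (X 1 - X 2) * P₂ = expLin3C 0 1 0 - expLin3C 0 0 1) :
    ∃ Q : MvPowerSeries (Fin 3) ℂ, symm12 Q ∧
      P₁ - (2 : ℂ)⁻¹ • ((1 + expLin3C 1 0 0) * P₂) = (X 1 - X 2 - X 0) * Q := by
  have hP1 : P₁ = PP1s := by
    refine mul_left_cancel₀ hw_ne ?_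
    rw [claimA, ← hP₁]
    ring
  have hP2 : P₂ = PP0s := by
    refine mul_left_cancel₀ hu_ne ?_
    rw [claimC, ← hP₂]
  have hVV' : VVs' = VVs := mul_left_cancel₀ hu_ne (claimV'.trans claimV.symm)
  refine ⟨(2 : ℂ)⁻¹ • VVs, ?_, ?_⟩
  · intro d
    rw [map_smul, map_smul]
    congr 1
    have h1 : MvPowerSeries.coeff (Finsupp.equivMapDomain (Equiv.swap (1 : Fin 3) 2) d) VVs
        = VVs' d := by
      have e0 : (Equiv.swap (1 : Fin 3) 2).symm 0 = 0 := by decide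
      have e1 : (Equiv.swap (1 : Fin 3) 2).symm 1 = 2 := by decide
      have e2 : (Equiv.swap (1 : Fin 3) 2).symm 2 = 1 := by decide
      simp only [MvPowerSeries.coeff_apply, VVs, VVs', Finsupp.equivMapDomain_apply,
        e0, e1, e2]
    rw [h1, hVV']
    rw [MvPowerSeries.coeff_apply]
  · have h2 : PP1s + PP1s - (1 + expLin3C 1 0 0) * PP0s = (X 1 - X 2 - X 0) * VVs := by
      refine mul_left_cancel₀ hu_ne ?_
      linear_combination claimA - (1 + expLin3C 1 0 0) * claimC + claimB
        - (X 1 - X 2 - X 0) * claimV - L1a + L1b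
    rw [hP1, hP2, MvPowerSeries.smul_eq_C_mul, MvPowerSeries.smul_eq_C_mul]
    have hC2 : (MvPowerSeries.C (σ := Fin 3) (R := ℂ)) 2⁻¹ + (MvPowerSeries.C (σ := Fin 3) (R := ℂ)) 2⁻¹ = 1 := by
      rw [← map_add]
      norm_num
    linear_combination (MvPowerSeries.C (σ := Fin 3) (R := ℂ) 2⁻¹) * h2 - PP1s * hC2

end
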